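/- Let H be a d×d real symmetric positive definite matrix, Q a d×r real matrix, K an r×r real symmetric matrix, and μ ≥ 0 a real number. If μ·ρ(K Qᵀ H⁻¹ Q) < 1, then the matrix H − μ·Q K Qᵀ is positive definite. -/

import Mathlib

open Matrix

/-- Spectral radius of a real square matrix: the maximum modulus of its eigenvalues
viewed as a complex matrix (`0` if there are none). -/
noncomputable def specRad {n : Type*} [Fintype n] [DecidableEq n]
    (A : Matrix n n ℝ) : ℝ :=
  sSup ((fun z : ℂ => ‖z‖) '' spectrum ℂ (A.map (algebraMap ℝ ℂ)))

lemma mem_spectrum_iff_det {n F : Type*} [Fintype n] [DecidableEq n] [Field F]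
    (M : Matrix n n F) (t : F) :
    t ∈ spectrum F M ↔ (t • (1 : Matrix n n F) - M).det = 0 := by
  rw [spectrum.mem_iff, Matrix.isUnit_iff_isUnit_det, isUnit_iff_ne_zero, not_not,
    Algebra.algebraMap_eq_smul_one]

lemma det_swap_aux {m n F : Type*} [Fintype m] [Fintype n] [DecidableEq m] [DecidableEq n]
    [Field F] (A : Matrix m n F) (B : Matrix n m F) {t : F} (ht : t ≠ 0)
    (h : (t • (1 : Matrix m m F) - A * B).det = 0) :
    (t • (1 : Matrix n n F) - B * A).det = 0 := by
  have h1 : t • ((1 : Matrix m m F) - A * (t⁻¹ • B)) = t • 1 - A * B := by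
    rw [smul_sub, Matrix.mul_smul, smul_smul, mul_inv_cancel₀ ht, one_smul]
  have h2 : ((1 : Matrix m m F) - A * (t⁻¹ • B)).det = 0 := by
    rw [← h1, Matrix.det_smul] at h
    exact (mul_eq_zero.mp h).resolve_left (pow_ne_zero _ ht)
  rw [Matrix.det_one_sub_mul_comm] at h2
  have h3 : t • ((1 : Matrix n n F) - (t⁻¹ • B) * A) = t • 1 - B * A := by
    rw [smul_sub, Matrix.smul_mul, smul_smul, mul_inv_cancel₀ ht, one_smul]
  rw [← h3, Matrix.det_smul, h2, mul_zero]

lemma posDef_conj_aux {n : Type*} [Fintype n] [DecidableEq n]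
    {M : Matrix n n ℝ} (hM : M.PosDef) {N : Matrix n n ℝ} (hN : IsUnit N.det) :
    (N * M * Nᴴ).PosDef := by
  exact hM.mul_mul_conjTranspose_same
    (Matrix.vecMul_injective_iff_isUnit.mpr ((Matrix.isUnit_iff_isUnit_det _).mpr hN))

lemma one_sub_smul_posDef {n : Type*} [Fintype n] [DecidableEq n]
    {B : Matrix n n ℝ} (hB : B.IsHermitian) {μ : ℝ}
    (h : ∀ i, μ * hB.eigenvalues i < 1) : ((1 : Matrix n n ℝ) - μ • B).PosDef := by
  set U : Matrix n n ℝ := (hB.eigenvectorUnitary : Matrix n n ℝ) with hUdef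
  have hU : U * star U = 1 := Matrix.mem_unitaryGroup_iff.mp hB.eigenvectorUnitary.2
  have hU' : star U * U = 1 := Matrix.mem_unitaryGroup_iff'.mp hB.eigenvectorUnitary.2
  have hUdet : IsUnit U.det :=
    (Matrix.isUnit_iff_isUnit_det _).mp ⟨⟨U, star U, hU, hU'⟩, rfl⟩
  have hdiag : Matrix.diagonal (fun i => 1 - μ * hB.eigenvalues i)
      = 1 - μ • Matrix.diagonal (RCLike.ofReal ∘ hB.eigenvalues) := by
    rw [RCLike.ofReal_real_eq_id]
    rw [← Matrix.diagonal_one, ← Matrix.diagonal_smul, ← Matrix.diagonal_sub]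
    rfl
  have key : (1 : Matrix n n ℝ) - μ • B
      = U * Matrix.diagonal (fun i => 1 - μ * hB.eigenvalues i) * star U := by
    rw [hdiag, Matrix.mul_sub, Matrix.sub_mul, Matrix.mul_one, hU, Matrix.mul_smul,
      Matrix.smul_mul]
    congr 2
    exact hB.spectral_theorem
  rw [key]
  have hdpd : (Matrix.diagonal (fun i => 1 - μ * hB.eigenvalues i)).PosDef :=
    Matrix.posDef_diagonal_iff.mpr fun i => by linarith [h i]
  exact posDef_conj_aux hdpd hUdet

theorem stmt0 {d r : ℕ} (H : Matrix (Fin d) (Fin d) ℝ) (Q : Matrix (Fin d) (Fin r) ℝ)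
    (K : Matrix (Fin r) (Fin r) ℝ) (μ : ℝ)
    (hH : H.PosDef) (hK : K.IsSymm) (hμ : 0 ≤ μ)
    (hspec : μ * specRad (K * Qᵀ * H⁻¹ * Q) < 1) :
    (H - μ • (Q * K * Qᵀ)).PosDef := by
  classical
  set C : Matrix (Fin d) (Fin d) ℝ := Q * K * Qᵀ with hCdef
  have hKh : K.IsHermitian := by
    rw [Matrix.IsHermitian, Matrix.conjTranspose_eq_transpose_of_trivial]
    exact hK
  have hCsym : C.IsHermitian := by
    have := Matrix.isHermitian_mul_mul_conjTranspose Q hKh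
    rwa [Matrix.conjTranspose_eq_transpose_of_trivial] at this
  set S : Matrix (Fin d) (Fin d) ℝ := (open scoped MatrixOrder in CFC.sqrt H) with hSdef
  have hSsym : S.IsHermitian := open scoped MatrixOrder in (CFC.sqrt_nonneg H).posSemidef.1
  have hSS : S * S = H := open scoped MatrixOrder in CFC.sqrt_mul_sqrt_self H hH.posSemidef.nonneg
  have hdetS : IsUnit S.det := by
    have hdet : S.det * S.det = H.det := by rw [← Matrix.det_mul, hSS]
    have : S.det ≠ 0 := by
      intro h0
      have := hH.det_pos
      rw [← hdet, h0, zero_mul] at this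
      exact lt_irrefl _ this
    exact this.isUnit
  have hSmul : S * S⁻¹ = 1 := Matrix.mul_nonsing_inv _ hdetS
  have hSmul' : S⁻¹ * S = 1 := Matrix.nonsing_inv_mul _ hdetS
  have hSinvsym : (S⁻¹).IsHermitian := hSsym.inv
  set B : Matrix (Fin d) (Fin d) ℝ := S⁻¹ * C * S⁻¹ with hBdef
  have hBsym : B.IsHermitian := by
    have := Matrix.isHermitian_mul_mul_conjTranspose S⁻¹ hCsym
    rwa [hSinvsym.eq] at this
  have hHinv : S⁻¹ * S⁻¹ = H⁻¹ := by rw [← Matrix.mul_inv_rev, hSS]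
  have heig : ∀ i, μ * hBsym.eigenvalues i < 1 := by
    intro i
    rcases le_or_gt (hBsym.eigenvalues i) 0 with hle | hpos
    · exact lt_of_le_of_lt (mul_nonpos_of_nonneg_of_nonpos hμ hle) one_pos
    · set t := hBsym.eigenvalues i with htdef
      have ht0 : t ≠ 0 := ne_of_gt hpos
      have hts : (t • (1 : Matrix (Fin d) (Fin d) ℝ) - B).det = 0 :=
        (mem_spectrum_iff_det _ _).mp (hBsym.eigenvalues_mem_spectrum_real i)
      have hts' : (t • (1 : Matrix (Fin d) (Fin d) ℝ) - S⁻¹ * (C * S⁻¹)).det = 0 := by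
        rwa [hBdef, Matrix.mul_assoc] at hts
      have h1 : (t • (1 : Matrix (Fin d) (Fin d) ℝ) - (C * S⁻¹) * S⁻¹).det = 0 :=
        det_swap_aux _ _ ht0 hts'
      have h2 : (C * S⁻¹) * S⁻¹ = Q * (K * Qᵀ * H⁻¹) := by
        rw [hCdef, ← hHinv]
        simp only [Matrix.mul_assoc]
      rw [h2] at h1
      have h3 : (t • (1 : Matrix (Fin r) (Fin r) ℝ) - (K * Qᵀ * H⁻¹) * Q).det = 0 :=
        det_swap_aux _ _ ht0 h1
      set A : Matrix (Fin r) (Fin r) ℝ := K * Qᵀ * H⁻¹ * Q with hAdef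
      have h3' : (t • (1 : Matrix (Fin r) (Fin r) ℝ) - A).det = 0 := h3
      have hmap : ((t • (1 : Matrix (Fin r) (Fin r) ℝ) - A).map (algebraMap ℝ ℂ))
          = (t : ℂ) • (1 : Matrix (Fin r) (Fin r) ℂ) - A.map (algebraMap ℝ ℂ) := by
        ext i j
        simp [Matrix.map_apply, Matrix.sub_apply, Matrix.smul_apply, Matrix.one_apply,
          apply_ite (algebraMap ℝ ℂ), smul_eq_mul]
        split <;> simp
      have h5 : ((t : ℂ) • (1 : Matrix (Fin r) (Fin r) ℂ) - A.map (algebraMap ℝ ℂ)).det = 0 := by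
        rw [← hmap, ← RingHom.mapMatrix_apply, ← RingHom.map_det, h3', map_zero]
      have h6 : (t : ℂ) ∈ spectrum ℂ (A.map (algebraMap ℝ ℂ)) :=
        (mem_spectrum_iff_det _ _).mpr h5
      have h7 : t ≤ specRad A := by
        have hmem : ‖(t : ℂ)‖ ∈ (fun z : ℂ => ‖z‖) '' spectrum ℂ (A.map (algebraMap ℝ ℂ)) :=
          ⟨_, h6, rfl⟩
        have hbdd : BddAbove ((fun z : ℂ => ‖z‖) '' spectrum ℂ (A.map (algebraMap ℝ ℂ))) :=
          ((Matrix.finite_spectrum _).image _).bddAbove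
        calc t ≤ |t| := le_abs_self t
          _ = ‖(t : ℂ)‖ := by rw [Complex.norm_real, Real.norm_eq_abs]
          _ ≤ specRad A := le_csSup hbdd hmem
      calc μ * t ≤ μ * specRad A := mul_le_mul_of_nonneg_left h7 hμ
        _ < 1 := hspec
  have hpd : ((1 : Matrix (Fin d) (Fin d) ℝ) - μ • B).PosDef := one_sub_smul_posDef hBsym heig
  have hSBS : S * B * S = C := by
    have : S * B * S = (S * S⁻¹) * C * (S⁻¹ * S) := by
      rw [hBdef]; simp only [Matrix.mul_assoc]
    rw [this, hSmul, hSmul', Matrix.one_mul, Matrix.mul_one]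
  have key : H - μ • C = S * ((1 : Matrix (Fin d) (Fin d) ℝ) - μ • B) * Sᴴ := by
    rw [hSsym.eq, Matrix.mul_sub, Matrix.sub_mul, Matrix.mul_one, hSS, Matrix.mul_smul,
      Matrix.smul_mul, hSBS]
  rw [show H - μ • (Q * K * Qᵀ) = H - μ • C from rfl, key]
  exact posDef_conj_aux hpd hdetS
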